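/- Let m > 1 be rational and a > 0, b rationals satisfying (2m/a)² = (m/a + b(m²−1))² + a²(m²−1)² and 2(m+1)² = 8m/a. Then 16(m−1)²(m+1)⁴b² + 8(m−1)(m+1)⁵b − 3m⁶ − 18m⁵ + 211m⁴ − 572m³ + 211m² − 18m − 3 = 0, and consequently (m³+11m²−5m+1)(m³−5m²+11m+1) is the square of a rational. -/

import Mathlib

/-- Isosceles-triangle–rhombus pairs (Case 4.2.2.1): b satisfies the stated quadratic,
hence (m³+11m²−5m+1)(m³−5m²+11m+1) is a rational square. -/
theorem stmt14 (m a b : ℚ) (hm : 1 < m) (ha : 0 < a)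
    (h1 : (2*m/a)^2 = (m/a + b*(m^2-1))^2 + a^2*(m^2-1)^2)
    (h2 : 2*(m+1)^2 = 8*m/a) :
    16*(m-1)^2*(m+1)^4*b^2 + 8*(m-1)*(m+1)^5*b
      - 3*m^6 - 18*m^5 + 211*m^4 - 572*m^3 + 211*m^2 - 18*m - 3 = 0 ∧
    ∃ w : ℚ, (m^3+11*m^2-5*m+1)*(m^3-5*m^2+11*m+1) = w^2 := by
  have hm0 : m ≠ 0 := by positivity
  have hm1 : (m+1) ≠ 0 := by positivity
  have ha0 : a ≠ 0 := ne_of_gt ha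
  have ha' : a = 4*m/((m+1)^2) := by
    field_simp at h2 ⊢
    linarith
  subst ha'
  field_simp at h1
  have key : 16*(m-1)^2*(m+1)^4*b^2 + 8*(m-1)*(m+1)^5*b
      - 3*m^6 - 18*m^5 + 211*m^4 - 572*m^3 + 211*m^2 - 18*m - 3 = 0 := by
    have key2 : (16*m^4*(m+1)^2) * (16*(m-1)^2*(m+1)^4*b^2 + 8*(m-1)*(m+1)^5*b
      - 3*m^6 - 18*m^5 + 211*m^4 - 572*m^3 + 211*m^2 - 18*m - 3) = 0 := by
      linear_combination (-16*m^4) * h1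
    have hne : (16*m^4*(m+1)^2) ≠ 0 := by positivity
    exact (mul_eq_zero.mp key2).resolve_left hne
  refine ⟨key, 2*(m-1)*(m+1)^2*b + (m+1)^3/2, ?_⟩
  linear_combination (-1/4) * key
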